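/- Perspective function bound for matrices: let A be positive definite and B positive semidefinite n×n matrices with mA ≤ B ≤ MA (0 < m < M), and f twice differentiable on [m,M] with α ≤ f'' ≤ β. Then (β/2)(A♮₂B + MmA - (M+m)B) ≤ P_f(A|B) - L_f(A|B) ≤ (α/2)(A♮₂B + MmA - (M+m)B) in the Loewner order, where P_f(A|B) = A^{1/2} f(A^{-1/2} B A^{-1/2}) A^{1/2}, A♮₂B = A^{1/2}(A^{-1/2}BA^{-1/2})² A^{1/2}, and L_f(A|B) = ((B - mA)f(M) + (MA - B)f(m))/(M-m). -/

import Mathlib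

open Matrix ComplexOrder

namespace Matrix.PosSemidef

/-- The positive semidefinite square root of a positive semidefinite matrix
(the definition Mathlib had in December 2024, since removed). -/
noncomputable def sqrt {𝕜 : Type*} [RCLike 𝕜] {n : Type*} [Fintype n] [DecidableEq n]
    {A : Matrix n n 𝕜} (hA : A.PosSemidef) : Matrix n n 𝕜 :=
  hA.1.eigenvectorUnitary.1 * diagonal ((↑) ∘ (√·) ∘ hA.1.eigenvalues) *
  (star hA.1.eigenvectorUnitary : Matrix n n 𝕜)


theorem posSemidef_sqrt {𝕜 : Type*} [RCLike 𝕜] {n : Type*} [Fintype n] [DecidableEq n]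
    {A : Matrix n n 𝕜} (hA : A.PosSemidef) : hA.sqrt.PosSemidef := by
  simp only [sqrt, Unitary.coe_star, Matrix.star_eq_conjTranspose]
  apply Matrix.PosSemidef.mul_mul_conjTranspose_same
  apply Matrix.PosSemidef.diagonal
  intro i
  simp [Real.sqrt_nonneg]

theorem sqrt_mul_self {𝕜 : Type*} [RCLike 𝕜] {n : Type*} [Fintype n] [DecidableEq n]
    {A : Matrix n n 𝕜} (hA : A.PosSemidef) : hA.sqrt * hA.sqrt = A := by
  have hUU : star (hA.1.eigenvectorUnitary : Matrix n n 𝕜)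
      * (hA.1.eigenvectorUnitary : Matrix n n 𝕜) = 1 :=
    Unitary.star_mul_self_of_mem (SetLike.coe_mem _)
  conv_rhs => rw [hA.1.spectral_theorem, Unitary.conjStarAlgAut_apply]
  simp only [sqrt, Unitary.coe_star]
  calc _ = (hA.1.eigenvectorUnitary : Matrix n n 𝕜) * diagonal ((↑) ∘ (√·) ∘ hA.1.eigenvalues)
        * (star (hA.1.eigenvectorUnitary : Matrix n n 𝕜) * (hA.1.eigenvectorUnitary : Matrix n n 𝕜))
        * diagonal ((↑) ∘ (√·) ∘ hA.1.eigenvalues) * star (hA.1.eigenvectorUnitary : Matrix n n 𝕜) := by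
        simp only [Matrix.mul_assoc]
    _ = _ := by
      rw [hUU, Matrix.mul_one, Matrix.mul_assoc _ (diagonal _) (diagonal _), diagonal_mul_diagonal]
      congr 3
      funext i
      simp only [Function.comp]
      rw [← RCLike.ofReal_mul, Real.mul_self_sqrt (hA.eigenvalues_nonneg i)]

end Matrix.PosSemidef

section scalar
variable {m M : ℝ}

private lemma interp_le {h : ℝ → ℝ} (hc : ConvexOn ℝ (Set.Icc m M) h) (hmM : m < M)
    {x : ℝ} (hx : x ∈ Set.Icc m M) :
    (M - m) * h x ≤ (M - x) * h m + (x - m) * h M := by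
  obtain ⟨hxm, hxM⟩ := hx
  have hd : (0:ℝ) < M - m := by linarith
  have ha : (0:ℝ) ≤ (M - x)/(M - m) := div_nonneg (by linarith) hd.le
  have hb : (0:ℝ) ≤ (x - m)/(M - m) := div_nonneg (by linarith) hd.le
  have hab : (M - x)/(M - m) + (x - m)/(M - m) = 1 := by field_simp; ring
  have h2 := hc.2 (Set.left_mem_Icc.2 hmM.le) (Set.right_mem_Icc.2 hmM.le) ha hb hab
  simp only [smul_eq_mul] at h2
  have hx' : (M - x)/(M - m) * m + (x - m)/(M - m) * M = x := by field_simp; ring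
  rw [hx'] at h2
  rw [div_mul_eq_mul_div, div_mul_eq_mul_div, ← add_div, le_div_iff₀ hd] at h2
  linarith

private lemma convex_aux {f f' f'' : ℝ → ℝ}
    (hf : ∀ x ∈ Set.Icc m M, HasDerivWithinAt f (f' x) (Set.Icc m M) x)
    (hf' : ∀ x ∈ Set.Icc m M, HasDerivWithinAt f' (f'' x) (Set.Icc m M) x)
    (h0 : ∀ x ∈ Set.Icc m M, 0 ≤ f'' x) : ConvexOn ℝ (Set.Icc m M) f :=
  convexOn_of_hasDerivWithinAt2_nonneg (convex_Icc m M)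
    (fun x hx => (hf x hx).continuousWithinAt)
    (fun x hx => ((hf x (interior_subset hx)).mono interior_subset))
    (fun x hx => ((hf' x (interior_subset hx)).mono interior_subset))
    (fun x hx => h0 x (interior_subset hx))

private lemma scalar_bound {α β : ℝ} {f : ℝ → ℝ} (hmM : m < M)
    (hf : ∀ x ∈ Set.Icc m M,
      HasDerivWithinAt f (derivWithin f (Set.Icc m M) x) (Set.Icc m M) x)
    (hf' : ∀ x ∈ Set.Icc m M, HasDerivWithinAt (derivWithin f (Set.Icc m M))
      (derivWithin (derivWithin f (Set.Icc m M)) (Set.Icc m M) x) (Set.Icc m M) x)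
    (hαβ : ∀ x ∈ Set.Icc m M,
      α ≤ derivWithin (derivWithin f (Set.Icc m M)) (Set.Icc m M) x ∧
        derivWithin (derivWithin f (Set.Icc m M)) (Set.Icc m M) x ≤ β)
    {x : ℝ} (hx : x ∈ Set.Icc m M) :
    β / 2 * (x * x + M * m - (M + m) * x)
        ≤ f x - (M - m)⁻¹ * (f M * (x - m) + f m * (M - x)) ∧
      f x - (M - m)⁻¹ * (f M * (x - m) + f m * (M - x))
        ≤ α / 2 * (x * x + M * m - (M + m) * x) := by
  have hd : (0:ℝ) < M - m := by linarith
  have hconv₁ : ConvexOn ℝ (Set.Icc m M) (fun y => f y - α/2 * (y*y)) := by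
    apply convex_aux (f' := fun y => derivWithin f (Set.Icc m M) y - α * y)
      (f'' := fun y => derivWithin (derivWithin f (Set.Icc m M)) (Set.Icc m M) y - α)
    · intro y hy
      have hq : HasDerivWithinAt (fun y : ℝ => α/2*(y*y)) (α * y) (Set.Icc m M) y := by
        have h := (((hasDerivAt_id y).mul (hasDerivAt_id y)).const_mul (α/2)).hasDerivWithinAt
          (s := Set.Icc m M)
        exact h.congr_deriv (by simp; ring)
      exact (hf y hy).sub hq
    · intro y hy
      have hq : HasDerivWithinAt (fun y : ℝ => α * y) α (Set.Icc m M) y := by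
        simpa using ((hasDerivAt_id y).const_mul α).hasDerivWithinAt (s := Set.Icc m M)
      exact (hf' y hy).sub hq
    · intro y hy; linarith [(hαβ y hy).1]
  have h₁ := interp_le hconv₁ hmM hx
  have hconv₂ : ConvexOn ℝ (Set.Icc m M) (fun y => β/2 * (y*y) - f y) := by
    apply convex_aux (f' := fun y => β * y - derivWithin f (Set.Icc m M) y)
      (f'' := fun y => β - derivWithin (derivWithin f (Set.Icc m M)) (Set.Icc m M) y)
    · intro y hy
      have hq : HasDerivWithinAt (fun y : ℝ => β/2*(y*y)) (β * y) (Set.Icc m M) y := by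
        have h := (((hasDerivAt_id y).mul (hasDerivAt_id y)).const_mul (β/2)).hasDerivWithinAt
          (s := Set.Icc m M)
        exact h.congr_deriv (by simp; ring)
      exact hq.sub (hf y hy)
    · intro y hy
      have hq : HasDerivWithinAt (fun y : ℝ => β * y) β (Set.Icc m M) y := by
        simpa using ((hasDerivAt_id y).const_mul β).hasDerivWithinAt (s := Set.Icc m M)
      exact hq.sub (hf' y hy)
    · intro y hy; linarith [(hαβ y hy).2]
  have h₂ := interp_le hconv₂ hmM hx
  have e : (M - m)⁻¹ * (f M * (x - m) + f m * (M - x))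
      = (f M * (x - m) + f m * (M - x)) / (M - m) := by ring
  constructor
  · rw [e, le_sub_comm, div_le_iff₀ hd]
    nlinarith [h₂]
  · rw [e, sub_le_comm, le_div_iff₀ hd]
    nlinarith [h₁]

end scalar

section matrixAux
variable {n : Type*} [Fintype n] [DecidableEq n] {C : Matrix n n ℂ} (hC : C.IsHermitian)

private lemma cfc'_add (p q : ℝ → ℝ) :
    hC.cfc (fun x => p x + q x) = hC.cfc p + hC.cfc q := by
  simp only [Matrix.IsHermitian.cfc, Unitary.conjStarAlgAut_apply, Function.comp_def]
  have key : (fun i => (RCLike.ofReal (p (hC.eigenvalues i) + q (hC.eigenvalues i)) : ℂ))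
      = fun i => (RCLike.ofReal (p (hC.eigenvalues i)) : ℂ)
          + (RCLike.ofReal (q (hC.eigenvalues i)) : ℂ) := by
    funext i; exact RCLike.ofReal_add _ _
  rw [key, ← Matrix.diagonal_add, Matrix.mul_add, Matrix.add_mul]

private lemma cfc'_sub (p q : ℝ → ℝ) :
    hC.cfc (fun x => p x - q x) = hC.cfc p - hC.cfc q := by
  simp only [Matrix.IsHermitian.cfc, Unitary.conjStarAlgAut_apply, Function.comp_def]
  have key : (fun i => (RCLike.ofReal (p (hC.eigenvalues i) - q (hC.eigenvalues i)) : ℂ))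
      = fun i => (RCLike.ofReal (p (hC.eigenvalues i)) : ℂ)
          - (RCLike.ofReal (q (hC.eigenvalues i)) : ℂ) := by
    funext i; exact RCLike.ofReal_sub _ _
  rw [key, ← Matrix.diagonal_sub, Matrix.mul_sub, Matrix.sub_mul]

private lemma cfc'_smul (r : ℝ) (p : ℝ → ℝ) :
    hC.cfc (fun x => r * p x) = r • hC.cfc p := by
  simp only [Matrix.IsHermitian.cfc, Unitary.conjStarAlgAut_apply, Function.comp_def]
  have key : (fun i => (RCLike.ofReal (r * p (hC.eigenvalues i)) : ℂ))
      = r • fun i => (RCLike.ofReal (p (hC.eigenvalues i)) : ℂ) := by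
    funext i
    simp [RCLike.ofReal_mul, RCLike.real_smul_eq_coe_mul]
  rw [key, Matrix.diagonal_smul, mul_smul_comm, smul_mul_assoc]

private lemma cfc'_const (r : ℝ) :
    hC.cfc (fun _ => r) = r • (1 : Matrix n n ℂ) := by
  simp only [Matrix.IsHermitian.cfc, Unitary.conjStarAlgAut_apply, Function.comp_def]
  have key : (fun _ : n => (RCLike.ofReal r : ℂ)) = r • fun _ : n => (1 : ℂ) := by
    funext i
    simp [RCLike.real_smul_eq_coe_mul]
  rw [key, Matrix.diagonal_smul, mul_smul_comm, smul_mul_assoc, Matrix.diagonal_one,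
    Matrix.mul_one, Unitary.mul_star_self_of_mem (SetLike.coe_mem _)]

private lemma cfc'_id : hC.cfc (fun x => x) = C := by
  conv_rhs => rw [hC.spectral_theorem]
  rfl

private lemma cfc'_mul (p q : ℝ → ℝ) :
    hC.cfc (fun x => p x * q x) = hC.cfc p * hC.cfc q := by
  have hUU : star (hC.eigenvectorUnitary : Matrix n n ℂ)
      * (hC.eigenvectorUnitary : Matrix n n ℂ) = 1 :=
    Unitary.star_mul_self_of_mem (SetLike.coe_mem _)
  simp only [Matrix.IsHermitian.cfc, Unitary.conjStarAlgAut_apply, Function.comp_def]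
  have h2 : ∀ X Y : Matrix n n ℂ,
      ((hC.eigenvectorUnitary : Matrix n n ℂ) * X * star (hC.eigenvectorUnitary : Matrix n n ℂ))
      * ((hC.eigenvectorUnitary : Matrix n n ℂ) * Y * star (hC.eigenvectorUnitary : Matrix n n ℂ))
      = (hC.eigenvectorUnitary : Matrix n n ℂ) * (X * Y)
          * star (hC.eigenvectorUnitary : Matrix n n ℂ) := by
    intro X Y
    calc ((hC.eigenvectorUnitary : Matrix n n ℂ) * X * star (hC.eigenvectorUnitary : Matrix n n ℂ))
        * ((hC.eigenvectorUnitary : Matrix n n ℂ) * Y * star (hC.eigenvectorUnitary : Matrix n n ℂ))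
        = (hC.eigenvectorUnitary : Matrix n n ℂ) * (X * ((star (hC.eigenvectorUnitary : Matrix n n ℂ)
            * (hC.eigenvectorUnitary : Matrix n n ℂ)) * (Y * star (hC.eigenvectorUnitary : Matrix n n ℂ)))) := by
          simp only [Matrix.mul_assoc]
      _ = _ := by
          rw [hUU, Matrix.one_mul]
          simp only [Matrix.mul_assoc]
  rw [h2, Matrix.diagonal_mul_diagonal]
  congr 1
  congr 1
  funext i
  exact congrFun (congrArg _ (funext fun j => RCLike.ofReal_mul _ _)) i

private lemma cfc'_sq : hC.cfc (fun x => x * x) = C ^ 2 := by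
  rw [cfc'_mul hC (fun x => x) (fun x => x), cfc'_id hC, pow_two]

private lemma cfc'_posSemidef (p : ℝ → ℝ) (hp : ∀ i, 0 ≤ p (hC.eigenvalues i)) :
    (hC.cfc p).PosSemidef := by
  rw [Matrix.IsHermitian.cfc, Unitary.conjStarAlgAut_apply, Matrix.star_eq_conjTranspose]
  apply Matrix.PosSemidef.mul_mul_conjTranspose_same
  apply Matrix.PosSemidef.diagonal
  intro i
  exact RCLike.ofReal_nonneg.mpr (hp i)

end matrixAux

/-- Perspective function bound: let `A` be positive definite and `B` positive
semidefinite with `m • A ≤ B ≤ M • A` in the Loewner order, `0 < m < M`, and let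
`f` be twice differentiable on `[m, M]` with `α ≤ f'' ≤ β` there.  With
`P_f(A|B) = √A · f(√A⁻¹ B √A⁻¹) · √A`, `A ♮₂ B = √A · (√A⁻¹ B √A⁻¹)² · √A` and
`L_f(A|B) = ((B - m A) f M + (M A - B) f m)/(M - m)`, one has
`(β/2)(A ♮₂ B + M m A - (M+m) B) ≤ P_f(A|B) - L_f(A|B)
  ≤ (α/2)(A ♮₂ B + M m A - (M+m) B)` in the Loewner order. -/
theorem perspective_function_bounds {n : ℕ} (A B : Matrix (Fin n) (Fin n) ℂ)
    (hA : A.PosDef) (hB : B.PosSemidef) (m M α β : ℝ) (hm : 0 < m) (hmM : m < M)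
    (hmA : (B - m • A).PosSemidef) (hMA : (M • A - B).PosSemidef)
    (f : ℝ → ℝ)
    (hf : ∀ x ∈ Set.Icc m M,
      HasDerivWithinAt f (derivWithin f (Set.Icc m M) x) (Set.Icc m M) x)
    (hf' : ∀ x ∈ Set.Icc m M, HasDerivWithinAt (derivWithin f (Set.Icc m M))
      (derivWithin (derivWithin f (Set.Icc m M)) (Set.Icc m M) x) (Set.Icc m M) x)
    (hαβ : ∀ x ∈ Set.Icc m M,
      α ≤ derivWithin (derivWithin f (Set.Icc m M)) (Set.Icc m M) x ∧
        derivWithin (derivWithin f (Set.Icc m M)) (Set.Icc m M) x ≤ β) :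
    let S := hA.posSemidef.sqrt
    let C := S⁻¹ * B * S⁻¹
    let P := S * cfc f C * S
    let nat2 := S * C ^ 2 * S
    let L := (M - m)⁻¹ • (f M • (B - m • A) + f m • (M • A - B))
    let K := nat2 + (M * m) • A - (M + m) • B
    ((P - L) - (β / 2) • K).PosSemidef ∧ ((α / 2) • K - (P - L)).PosSemidef := by
  intro S C P nat2 L K
  have hS : S.PosSemidef := Matrix.PosSemidef.posSemidef_sqrt _
  have hSH : S.IsHermitian := hS.1
  have hSS : S * S = A := hA.posSemidef.sqrt_mul_self
  have hdet : IsUnit S.det := by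
    have h1 : S.det * S.det = A.det := by rw [← Matrix.det_mul, hSS]
    have hAdet : IsUnit A.det := (Matrix.isUnit_iff_isUnit_det A).mp hA.isUnit
    exact isUnit_of_mul_isUnit_left (h1 ▸ hAdet)
  have hS1 : S⁻¹ * S = 1 := Matrix.nonsing_inv_mul S hdet
  have hS2 : S * S⁻¹ = 1 := Matrix.mul_nonsing_inv S hdet
  have hSiH : (S⁻¹).IsHermitian := hSH.inv
  have hSCS : S * C * S = B := by
    show S * (S⁻¹ * B * S⁻¹) * S = B
    simp only [← Matrix.mul_assoc]
    rw [hS2, Matrix.one_mul, Matrix.mul_assoc, hS1, Matrix.mul_one]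
  have hS1S : S * (1 : Matrix (Fin n) (Fin n) ℂ) * S = A := by
    rw [Matrix.mul_one, hSS]
  have hSAS : S⁻¹ * A * S⁻¹ = 1 := by
    rw [← hSS, ← Matrix.mul_assoc, hS1, Matrix.one_mul, hS2]
  have hCH : C.IsHermitian := by
    have h := Matrix.isHermitian_conjTranspose_mul_mul S⁻¹ hB.1
    rwa [hSiH.eq] at h
  have hCm : (C - m • (1 : Matrix (Fin n) (Fin n) ℂ)).PosSemidef := by
    have h := hmA.conjTranspose_mul_mul_same S⁻¹
    rw [hSiH.eq] at h
    have e : S⁻¹ * (B - m • A) * S⁻¹ = C - m • (1 : Matrix (Fin n) (Fin n) ℂ) := by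
      show _ = S⁻¹ * B * S⁻¹ - m • (1 : Matrix (Fin n) (Fin n) ℂ)
      rw [Matrix.mul_sub, Matrix.sub_mul, Matrix.mul_smul, Matrix.smul_mul, hSAS]
    rwa [e] at h
  have hCM : (M • (1 : Matrix (Fin n) (Fin n) ℂ) - C).PosSemidef := by
    have h := hMA.conjTranspose_mul_mul_same S⁻¹
    rw [hSiH.eq] at h
    have e : S⁻¹ * (M • A - B) * S⁻¹ = M • (1 : Matrix (Fin n) (Fin n) ℂ) - C := by
      show _ = M • (1 : Matrix (Fin n) (Fin n) ℂ) - S⁻¹ * B * S⁻¹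
      rw [Matrix.mul_sub, Matrix.sub_mul, Matrix.mul_smul, Matrix.smul_mul, hSAS]
    rwa [e] at h
  have heig : ∀ i, hCH.eigenvalues i ∈ Set.Icc m M := by
    intro i
    have hx : hCH.eigenvalues i ∈ spectrum ℝ C := by
      rw [hCH.spectrum_real_eq_range_eigenvalues]; exact ⟨i, rfl⟩
    constructor
    · have h1 : hCH.eigenvalues i - m
          ∈ spectrum ℝ (C - algebraMap ℝ (Matrix (Fin n) (Fin n) ℂ) m) := by
        rw [← spectrum.sub_singleton_eq]
        exact Set.sub_mem_sub hx rfl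
      rw [Algebra.algebraMap_eq_smul_one, hCm.1.spectrum_real_eq_range_eigenvalues] at h1
      obtain ⟨j, hj⟩ := h1
      have := hCm.eigenvalues_nonneg j
      rw [hj] at this; linarith
    · have h1 : M - hCH.eigenvalues i
          ∈ spectrum ℝ (algebraMap ℝ (Matrix (Fin n) (Fin n) ℂ) M - C) := by
        rw [← spectrum.singleton_sub_eq]
        exact Set.sub_mem_sub rfl hx
      rw [Algebra.algebraMap_eq_smul_one, hCM.1.spectrum_real_eq_range_eigenvalues] at h1
      obtain ⟨j, hj⟩ := h1
      have := hCM.eigenvalues_nonneg j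
      rw [hj] at this; linarith
  -- main psd transfer
  have hmain : ∀ g : ℝ → ℝ, (∀ i, 0 ≤ g (hCH.eigenvalues i)) →
      (S * hCH.cfc g * S).PosSemidef := by
    intro g hg
    have h1 := (cfc'_posSemidef hCH g hg).mul_mul_conjTranspose_same S
    rwa [hSH.eq] at h1
  -- cfc decompositions
  have e₁ : hCH.cfc (fun x => x - m) = C - m • (1 : Matrix (Fin n) (Fin n) ℂ) := by
    rw [cfc'_sub hCH, cfc'_id hCH, cfc'_const hCH]
  have e₂ : hCH.cfc (fun x => M - x) = M • (1 : Matrix (Fin n) (Fin n) ℂ) - C := by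
    rw [cfc'_sub hCH, cfc'_id hCH, cfc'_const hCH]
  have e₃ : hCH.cfc (fun x => (M - m)⁻¹ * (f M * (x - m) + f m * (M - x)))
      = (M - m)⁻¹ • (f M • (C - m • (1 : Matrix (Fin n) (Fin n) ℂ))
          + f m • (M • (1 : Matrix (Fin n) (Fin n) ℂ) - C)) := by
    rw [cfc'_smul hCH, cfc'_add hCH, cfc'_smul hCH, cfc'_smul hCH, e₁, e₂]
  have e₄ : hCH.cfc (fun x => x * x + M * m - (M + m) * x)
      = C ^ 2 + (M * m) • (1 : Matrix (Fin n) (Fin n) ℂ) - (M + m) • C := by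
    rw [cfc'_sub hCH, cfc'_add hCH, cfc'_sq hCH, cfc'_const hCH, cfc'_smul hCH, cfc'_id hCH]
  have hfun₁ : hCH.cfc (fun x => f x - (M - m)⁻¹ * (f M * (x - m) + f m * (M - x)) - β / 2 * (x * x + M * m - (M + m) * x))
      = hCH.cfc f - (M - m)⁻¹ • (f M • (C - m • (1 : Matrix (Fin n) (Fin n) ℂ))
          + f m • (M • (1 : Matrix (Fin n) (Fin n) ℂ) - C))
        - (β / 2) • (C ^ 2 + (M * m) • (1 : Matrix (Fin n) (Fin n) ℂ) - (M + m) • C) := by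
    rw [cfc'_sub hCH, cfc'_sub hCH, e₃, cfc'_smul hCH, e₄]
  have hfun₂ : hCH.cfc (fun x => α / 2 * (x * x + M * m - (M + m) * x) - (f x - (M - m)⁻¹ * (f M * (x - m) + f m * (M - x))))
      = (α / 2) • (C ^ 2 + (M * m) • (1 : Matrix (Fin n) (Fin n) ℂ) - (M + m) • C)
        - (hCH.cfc f - (M - m)⁻¹ • (f M • (C - m • (1 : Matrix (Fin n) (Fin n) ℂ))
          + f m • (M • (1 : Matrix (Fin n) (Fin n) ℂ) - C))) := by
    rw [cfc'_sub hCH, cfc'_sub hCH, e₃, cfc'_smul hCH, e₄]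
  -- scalar positivity
  have hg₁ : ∀ i, 0 ≤ (fun x => f x - (M - m)⁻¹ * (f M * (x - m) + f m * (M - x)) - β / 2 * (x * x + M * m - (M + m) * x)) (hCH.eigenvalues i) := by
    intro i
    have := (scalar_bound hmM hf hf' hαβ (heig i)).1
    simp only
    linarith [this]
  have hg₂ : ∀ i, 0 ≤ (fun x => α / 2 * (x * x + M * m - (M + m) * x) - (f x - (M - m)⁻¹ * (f M * (x - m) + f m * (M - x)))) (hCH.eigenvalues i) := by
    intro i
    have := (scalar_bound hmM hf hf' hαβ (heig i)).2
    simp only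
    linarith [this]
  -- identities between the goal matrices and S * cfc g * S
  have hP : P = S * hCH.cfc f * S := by
    show S * cfc f C * S = _
    rw [hCH.cfc_eq]
  have key₁ : (P - L) - (β / 2) • K = S * hCH.cfc (fun x => f x - (M - m)⁻¹ * (f M * (x - m) + f m * (M - x)) - β / 2 * (x * x + M * m - (M + m) * x)) * S := by
    rw [hfun₁, hP]
    show S * hCH.cfc f * S - (M - m)⁻¹ • (f M • (B - m • A) + f m • (M • A - B))
        - (β / 2) • (S * C ^ 2 * S + (M * m) • A - (M + m) • B) = _
    rw [← hSCS, ← hS1S]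
    simp only [Matrix.mul_sub, Matrix.sub_mul, Matrix.mul_add, Matrix.add_mul,
      mul_smul_comm, smul_mul_assoc]
  have key₂ : (α / 2) • K - (P - L) = S * hCH.cfc (fun x => α / 2 * (x * x + M * m - (M + m) * x) - (f x - (M - m)⁻¹ * (f M * (x - m) + f m * (M - x)))) * S := by
    rw [hfun₂, hP]
    show (α / 2) • (S * C ^ 2 * S + (M * m) • A - (M + m) • B)
        - (S * hCH.cfc f * S - (M - m)⁻¹ • (f M • (B - m • A) + f m • (M • A - B))) = _
    rw [← hSCS, ← hS1S]
    simp only [Matrix.mul_sub, Matrix.sub_mul, Matrix.mul_add, Matrix.add_mul,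
      mul_smul_comm, smul_mul_assoc]
  exact ⟨key₁ ▸ hmain _ hg₁, key₂ ▸ hmain _ hg₂⟩
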